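/- arXiv:2605.10414 — 2 statements merged into one kernel-verified Lean document; each statement's English description precedes it below -/
import Mathlib

section
/- Under the hypotheses of the unprotected-mass bound (|s_{i,m}| ≤ S_max, unprotected masks M_{i,k} = C·k, current-token mask M_{i,i} = C·i, C = Γ g_i / T), define the effective context length Δ^{eff,p}_i = (T / (Γ g_i)) · (2 S_max + log(|U|/p)) for a tolerance p ∈ (0,1). Then every unprotected token k with i − k ≥ Δ^{eff,p}_i satisfies, collectively, Σ_{k∈U, i−k ≥ Δ^{eff,p}_i} α_{i,k} ≤ p. -/
open Finset

/-- the collective attention mass of unprotected tokens beyond the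
effective context length `Δ^{eff,p} = (T/(Γ g))(2 S_max + log(|U|/p))` is at most `p`. -/
theorem gape_effective_context_length
    (i : ℕ) (Γ T g Smax p : ℝ) (hΓ : 0 < Γ) (hT : 0 < T) (hg : 0 < g)
    (hp0 : 0 < p) (hp1 : p < 1)
    (s M : ℕ → ℝ)
    (hs : ∀ m ≤ i, |s m| ≤ Smax)
    (U : Finset ℕ) (hU : U ⊆ Finset.range i)
    (hMU : ∀ k ∈ U, M k = (Γ * g / T) * k)
    (hMi : M i = (Γ * g / T) * i)
    (α : ℕ → ℝ)
    (hα : ∀ k, α k = Real.exp (s k + M k) /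
        ∑ m ∈ Finset.range (i + 1), Real.exp (s m + M m)) :
    ∑ k ∈ U.filter
        (fun k : ℕ => (T / (Γ * g)) * (2 * Smax + Real.log ((U.card : ℝ) / p))
          ≤ (i : ℝ) - (k : ℝ)), α k ≤ p := by
  rcases U.eq_empty_or_nonempty with hUe | hUne
  · simp [hUe, hp0.le]
  have hUcard : (0:ℝ) < U.card := by exact_mod_cast Finset.card_pos.mpr hUne
  set C := Γ * g / T with hCdef
  have hC : 0 < C := by positivity
  set L := Real.log ((U.card:ℝ) / p) with hLdef
  set Z := ∑ m ∈ Finset.range (i + 1), Real.exp (s m + M m) with hZ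
  have hZge : Real.exp (s i + M i) ≤ Z :=
    Finset.single_le_sum (f := fun m => Real.exp (s m + M m))
      (fun m _ => (Real.exp_pos _).le) (by simp)
  have hZpos : 0 < Z := lt_of_lt_of_le (Real.exp_pos _) hZge
  have key : ∀ k ∈ U.filter
      (fun k : ℕ => (T / (Γ * g)) * (2 * Smax + L) ≤ (i : ℝ) - (k : ℝ)),
      α k ≤ p / U.card := by
    intro k hk
    rw [Finset.mem_filter] at hk
    obtain ⟨hkU, hkd⟩ := hk
    have hki : k < i := Finset.mem_range.mp (hU hkU)
    have hMk := hMU k hkU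
    have hsk := abs_le.mp (hs k hki.le)
    have hsi := abs_le.mp (hs i le_rfl)
    have hC1 : 2 * Smax + L ≤ C * ((i:ℝ) - k) := by
      have h1 : (T / (Γ * g)) = 1 / C := by
        rw [hCdef]; field_simp
      rw [h1] at hkd
      calc 2 * Smax + L = C * ((1 / C) * (2 * Smax + L)) := by field_simp
        _ ≤ C * ((i:ℝ) - k) := mul_le_mul_of_nonneg_left hkd hC.le
    have hexp : s k + M k - (s i + M i) ≤ -L := by
      rw [hMk, hMi]; nlinarith
    have hαk : α k ≤ Real.exp (s k + M k - (s i + M i)) := by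
      rw [hα k, Real.exp_sub]
      gcongr
    have hfinal : Real.exp (s k + M k - (s i + M i)) ≤ p / U.card := by
      have h2 : Real.exp (s k + M k - (s i + M i)) ≤ Real.exp (-L) :=
        Real.exp_le_exp.mpr hexp
      have h3 : Real.exp (-L) = p / U.card := by
        rw [hLdef, ← Real.log_inv, Real.exp_log (by positivity)]
        rw [inv_div]
      linarith
    linarith
  calc ∑ k ∈ U.filter
        (fun k : ℕ => (T / (Γ * g)) * (2 * Smax + L) ≤ (i : ℝ) - (k : ℝ)), α k
      ≤ (U.filter (fun k : ℕ => (T / (Γ * g)) * (2 * Smax + L) ≤ (i : ℝ) - (k : ℝ))).card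
          • (p / U.card) := Finset.sum_le_card_nsmul _ _ _ key
    _ = ((U.filter (fun k : ℕ => (T / (Γ * g)) * (2 * Smax + L) ≤ (i : ℝ) - (k : ℝ))).card : ℝ)
          * (p / U.card) := nsmul_eq_mul _ _
    _ ≤ (U.card : ℝ) * (p / U.card) := by
        have hcle : ((U.filter (fun k : ℕ => (T / (Γ * g)) * (2 * Smax + L) ≤ (i : ℝ) - (k : ℝ))).card : ℝ) ≤ (U.card : ℝ) := by
          exact_mod_cast Finset.card_filter_le _ _
        have : (0:ℝ) ≤ p / U.card := by positivity
        exact mul_le_mul_of_nonneg_right hcle this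
    _ = p := by field_simp
end

section
/- (Eviction horizon.) Assume |s_{i,m}| ≤ S_max for all m (so the maximal semantic differential is 2 S_max) and g_i ≥ ε > 0. If a token at position k < i has landmark gate l_k < 1 and distance i − k > Δ_elim(l_k) := 2 S_max T / (Γ ε (1 − l_k)), then retrieval a_{i,k} > a_{i,i} is impossible: for all admissible semantic scores one has a_{i,k} ≤ a_{i,i}. In particular, an unprotected needle (l_k = 0) at relative depth ρ = k/i cannot be retrieved once i ≥ i_fail := 2 S_max T / (Γ g_i (1−ρ)); and for i ≥ i_fail, retrieval requires l_k > 1 − 2 S_max T / (Γ g_i · i · (1−ρ)). -/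
/-- eviction horizon: beyond the distance `Δ_elim(l_k)` retrieval of a
non-fully-protected token is impossible; an unprotected needle fails once the sequence
length reaches `i_fail`; and for long sequences retrieval forces a large landmark gate. -/
theorem gape_eviction_horizon
    (i k : ℝ) (hi : 0 < i) (hk : k < i)
    (Γ T g ε Smax : ℝ) (hΓ : 0 < Γ) (hT : 0 < T) (hε : 0 < ε) (hgε : ε ≤ g)
    (lk : ℝ) (hlk0 : 0 ≤ lk) (hlk1 : lk < 1)
    (sik sii : ℝ) (hsik : |sik| ≤ Smax) (hsii : |sii| ≤ Smax)
    (Mik Mii : ℝ)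
    (hMik : Mik = (Γ * g / T) * (k * (1 - lk) + i * lk))
    (hMii : Mii = (Γ * g / T) * i) :
    (i - k > 2 * Smax * T / (Γ * ε * (1 - lk)) → sik + Mik ≤ sii + Mii) ∧
    (lk = 0 → i ≥ 2 * Smax * T / (Γ * g * (1 - k / i)) → sik + Mik ≤ sii + Mii) ∧
    (sik + Mik > sii + Mii →
      lk > 1 - 2 * Smax * T / (Γ * g * i * (1 - k / i))) := by
  have hg : 0 < g := lt_of_lt_of_le hε hgε
  have hik : 0 < i - k := by linarith
  have h1 : 0 < 1 - lk := by linarith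
  have hs1 := abs_le.mp hsik
  have hs2 := abs_le.mp hsii
  have hdiff : sik - sii ≤ 2 * Smax := by linarith [hs1.1, hs1.2, hs2.1, hs2.2]
  -- Mii - Mik = (Γ g / T)(i-k)(1-lk)
  have hM : Mii - Mik = (Γ * g / T) * ((i - k) * (1 - lk)) := by
    rw [hMii, hMik]; ring
  have hTi : T ≠ 0 := ne_of_gt hT
  have hii : i ≠ 0 := ne_of_gt hi
  have hfrac : i * (1 - k / i) = i - k := by field_simp
  refine ⟨?_, ?_, ?_⟩
  · intro h
    have hden : 0 < Γ * ε * (1 - lk) := by positivity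
    have h2 : 2 * Smax * T < (i - k) * (Γ * ε * (1 - lk)) := by
      rw [gt_iff_lt, div_lt_iff₀ hden] at h; exact h
    have h3 : 2 * Smax < (Γ * g / T) * ((i - k) * (1 - lk)) := by
      rw [div_mul_eq_mul_div, lt_div_iff₀ hT]
      nlinarith [mul_nonneg (mul_nonneg hΓ.le (sub_nonneg.mpr hgε)) (mul_pos hik h1).le]
    nlinarith
  · intro hlk hbig
    subst hlk
    have hden : 0 < Γ * g * (1 - k / i) := by
      have : 0 < 1 - k / i := by
        rw [sub_pos, div_lt_one hi]; exact hk
      positivity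
    have h2 : 2 * Smax * T ≤ i * (Γ * g * (1 - k / i)) := by
      rw [ge_iff_le, div_le_iff₀ hden] at hbig; exact hbig
    have h3 : 2 * Smax ≤ (Γ * g / T) * (i - k) := by
      rw [div_mul_eq_mul_div, le_div_iff₀ hT]
      have he : i * (Γ * g * (1 - k / i)) = Γ * g * (i - k) := by
        rw [show i * (Γ * g * (1 - k / i)) = Γ * g * (i * (1 - k / i)) by ring, hfrac]
      linarith
    have : Mii - Mik = (Γ * g / T) * (i - k) := by
      rw [hM]; ring_nf
    nlinarith
  · intro h
    have h2 : (Γ * g / T) * ((i - k) * (1 - lk)) < 2 * Smax := by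
      nlinarith
    have h3 : (Γ * g) * ((i - k) * (1 - lk)) < 2 * Smax * T := by
      rw [div_mul_eq_mul_div, div_lt_iff₀ hT] at h2
      linarith
    have hden : 0 < Γ * g * i * (1 - k / i) := by
      have : 0 < 1 - k / i := by
        rw [sub_pos, div_lt_one hi]; exact hk
      positivity
    have h4 : 1 - lk < 2 * Smax * T / (Γ * g * i * (1 - k / i)) := by
      rw [lt_div_iff₀ hden]
      have : Γ * g * i * (1 - k / i) = Γ * g * (i - k) := by
        field_simp
      rw [this]
      nlinarith
    linarith
end
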